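/- For p ≥ 2 and ε ∈ [0,2], the inequality 1 - (1 - (ε/2)^p)^{1/p} ≥ ε^p/(p·2^p) holds. -/
import Mathlib

open Real

/-- For real `p ≥ 2` and `ε ∈ [0,2]`: `1 - (1 - (ε/2)^p)^{1/p} ≥ ε^p/(p·2^p)`. -/
theorem modulus_lower_bound_large_p (p ε : ℝ) (hp : 2 ≤ p)
    (hε0 : 0 ≤ ε) (hε2 : ε ≤ 2) :
    ε ^ p / (p * 2 ^ p) ≤ 1 - (1 - (ε / 2) ^ p) ^ (1 / p) := by
  have hp0 : (0:ℝ) < p := by linarith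
  set t : ℝ := (ε / 2) ^ p with ht
  have ht0 : 0 ≤ t := rpow_nonneg (by linarith) p
  have ht1 : t ≤ 1 := by
    have := rpow_le_one (x := ε / 2) (by linarith) (by linarith) hp0.le
    simpa [ht] using this
  have key : (1 - t) ^ (1 / p) ≤ 1 - t / p := by
    have hb : 1 + p * (-(t / p)) ≤ (1 + -(t / p)) ^ p :=
      one_add_mul_self_le_rpow_one_add (by
        have : t / p ≤ 1 := div_le_one_of_le₀ (ht1.trans (by linarith)) hp0.le
        linarith) (by linarith)
    have h1 : 1 + p * (-(t / p)) = 1 - t := by field_simp; ring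
    have h2 : (0:ℝ) ≤ 1 - t / p := by
      have : t / p ≤ 1 := div_le_one_of_le₀ (ht1.trans (by linarith)) hp0.le
      linarith
    rw [h1] at hb
    calc (1 - t) ^ (1 / p) ≤ ((1 + -(t / p)) ^ p) ^ (1 / p) :=
          rpow_le_rpow (by linarith) hb (by positivity)
      _ = 1 - t / p := by
          have : (1:ℝ) + -(t / p) = 1 - t / p := by ring
          rw [this, ← rpow_mul h2, mul_one_div, div_self hp0.ne', rpow_one]
  have hdiv : ε ^ p / (p * 2 ^ p) = t / p := by
    rw [ht, div_rpow hε0 (by norm_num)]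
    rw [div_div, mul_comm]
  rw [hdiv]
  linarith
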